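/- The matrix Φ is Hermitian (its conjugate transpose equals Φ) and satisfies Φ * η * Φ = η; consequently Φ is invertible with inverse Φ⁻¹ = η * Φ * η. -/

import Mathlib

open Complex ComplexConjugate Matrix

/-- The `SU(2,1)` metric `η = diag(-1, 1, 1)`. -/
noncomputable def etaM : Matrix (Fin 3) (Fin 3) ℂ :=
  Matrix.diagonal ![-1, 1, 1]

/-- The vector `v` built from the Ernst potential `ℰ = -X - Λ conj(Λ) + i Y`
and the electromagnetic potential `Λ`:
`v = (2√X)⁻¹ (ℰ - 1, 2Λ, ℰ + 1)`. -/
noncomputable def vE (X Y : ℝ) (Λ : ℂ) : Fin 3 → ℂ :=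
  let ℰ : ℂ := -(X : ℂ) - Λ * conj Λ + Complex.I * Y
  ![(ℰ - 1) / (2 * Real.sqrt X), Λ / Real.sqrt X, (ℰ + 1) / (2 * Real.sqrt X)]

/-- The hermitian matrix `Φ` of the Mazur construction:
`Φ_{ab} = η_{ab} + 2 conj(v_a) v_b`. -/
noncomputable def PhiM (X Y : ℝ) (Λ : ℂ) : Matrix (Fin 3) (Fin 3) ℂ :=
  Matrix.of fun a b => etaM a b + 2 * conj (vE X Y Λ a) * vE X Y Λ b

set_option maxHeartbeats 1000000 in
/-- `Φ` is Hermitian and satisfies `Φ η Φ = η`; consequently it is invertible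
with inverse `Φ⁻¹ = η Φ η`. -/
theorem PhiM_hermitian_eta_inverse (X Y : ℝ) (hX : 0 < X) (Λ : ℂ) :
    (PhiM X Y Λ)ᴴ = PhiM X Y Λ ∧
      PhiM X Y Λ * etaM * PhiM X Y Λ = etaM ∧
      IsUnit (PhiM X Y Λ) ∧
      (PhiM X Y Λ)⁻¹ = etaM * PhiM X Y Λ * etaM := by
  have hs : (Real.sqrt X : ℂ) ≠ 0 := by
    simpa using (Real.sqrt_ne_zero hX.le).mpr (ne_of_gt hX)
  have hX2 : ((X : ℝ) : ℂ) = (Real.sqrt X : ℂ) ^ 2 := by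
    norm_cast; rw [Real.sq_sqrt hX.le]
  set v := vE X Y Λ with hv
  have key : -(conj (v 0) * v 0) + conj (v 1) * v 1 + conj (v 2) * v 2 = -1 := by
    simp only [hv, vE, Matrix.cons_val_zero, Matrix.cons_val_one, Matrix.head_cons,
      Matrix.cons_val_two, Matrix.tail_cons, map_div₀, _root_.map_mul, _root_.map_add,
      _root_.map_sub, map_neg, _root_.map_one, _root_.map_ofNat, Complex.conj_ofReal,
      Complex.conj_I, RingHomCompTriple.comp_apply, Complex.conj_conj]
    rw [hX2]
    field_simp
    ring_nf
    simp only [RingHom.id_apply]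
    ring
  have h1 : (PhiM X Y Λ)ᴴ = PhiM X Y Λ := by
    ext a b
    fin_cases a <;> fin_cases b <;>
      · simp only [PhiM, Matrix.conjTranspose_apply, Matrix.of_apply, _root_.map_add,
          _root_.map_mul, _root_.map_ofNat, Complex.conj_conj, etaM]
        simp [Matrix.diagonal]
        ring
  have h2 : PhiM X Y Λ * etaM * PhiM X Y Λ = etaM := by
    ext a b
    fin_cases a <;> fin_cases b <;>
      · simp [PhiM, etaM, Matrix.mul_apply, Fin.sum_univ_three, Matrix.diagonal, ← hv]
        first
          | linear_combination (4 * conj (v 0) * v 0) * key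
          | linear_combination (4 * conj (v 0) * v 1) * key
          | linear_combination (4 * conj (v 0) * v 2) * key
          | linear_combination (4 * conj (v 1) * v 0) * key
          | linear_combination (4 * conj (v 1) * v 1) * key
          | linear_combination (4 * conj (v 1) * v 2) * key
          | linear_combination (4 * conj (v 2) * v 0) * key
          | linear_combination (4 * conj (v 2) * v 1) * key
          | linear_combination (4 * conj (v 2) * v 2) * key
  have heta2 : etaM * etaM = 1 := by
    ext a b
    fin_cases a <;> fin_cases b <;>
      simp [etaM, Matrix.mul_apply, Fin.sum_univ_three, Matrix.diagonal]
  have hleft : etaM * PhiM X Y Λ * etaM * PhiM X Y Λ = 1 := by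
    calc etaM * PhiM X Y Λ * etaM * PhiM X Y Λ
        = etaM * (PhiM X Y Λ * etaM * PhiM X Y Λ) := by simp only [mul_assoc]
      _ = 1 := by rw [h2, heta2]
  have hright : PhiM X Y Λ * (etaM * PhiM X Y Λ * etaM) = 1 := by
    calc PhiM X Y Λ * (etaM * PhiM X Y Λ * etaM)
        = (PhiM X Y Λ * etaM * PhiM X Y Λ) * etaM := by simp only [mul_assoc]
      _ = 1 := by rw [h2, heta2]
  exact ⟨h1, h2, ⟨⟨PhiM X Y Λ, etaM * PhiM X Y Λ * etaM, hright, hleft⟩, rfl⟩,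
    Matrix.inv_eq_right_inv hright⟩
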